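/- Let R be a unital ring, n ≥ 2, and M a 2-torsion free unital Mₙ(R)-bimodule. If D : Mₙ(R) → M is an additive map such that for all A, B ∈ Mₙ(R) with AB = BA = 0 one has D(A)B + A D(B) + D(B)A + B D(A) = 0, then there exists a derivation δ : Mₙ(R) → M such that D(A) = δ(A) + A·D(1) for all A, and D(1) lies in the centre of M (i.e., D(1) commutes with every element of Mₙ(R) acting on M: A·D(1) = D(1)·A for all A ∈ Mₙ(R)). -/

import Mathlib

/-- A (not necessarily unital) bimodule structure of a ring `A` on an
additive group `M`, given by a left action `l` and a right action `r`. -/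
structure RingBimod (A M : Type*) [Ring A] [AddCommGroup M] where
  l : A → M → M
  r : M → A → M
  l_add : ∀ a m₁ m₂, l a (m₁ + m₂) = l a m₁ + l a m₂
  add_l : ∀ a₁ a₂ m, l (a₁ + a₂) m = l a₁ m + l a₂ m
  r_add : ∀ m₁ m₂ a, r (m₁ + m₂) a = r m₁ a + r m₂ a
  add_r : ∀ m a₁ a₂, r m (a₁ + a₂) = r m a₁ + r m a₂
  mul_l : ∀ a₁ a₂ m, l (a₁ * a₂) m = l a₁ (l a₂ m)
  r_mul : ∀ m a₁ a₂, r m (a₁ * a₂) = r (r m a₁) a₂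
  l_r : ∀ a₁ m a₂, l a₁ (r m a₂) = r (l a₁ m) a₂

namespace Stmt1Aux

open Matrix Finset

variable {R : Type*} [Ring R] {n : ℕ} {M : Type*} [AddCommGroup M]

/-- abbreviation for std basis matrices -/
def sb (i j : Fin n) (a : R) : Matrix (Fin n) (Fin n) R := Matrix.single i j a

@[simp] lemma sb_mul_same (i j k : Fin n) (a b : R) :
    sb i j a * sb j k b = sb i k (a * b) := Matrix.single_mul_single_same _ _ _ _ _

@[simp] lemma sb_mul_ne (i : Fin n) {j k : Fin n} (l : Fin n) (h : j ≠ k) (a b : R) :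
    sb i j a * sb k l b = 0 := Matrix.single_mul_single_of_ne _ _ _ _ h _

@[simp] lemma sb_zero (i j : Fin n) : sb i j (0 : R) = 0 := Matrix.single_zero _ _

lemma sb_add (i j : Fin n) (a b : R) : sb i j (a + b) = sb i j a + sb i j b :=
  Matrix.single_add _ _ _ _

lemma one_eq_sum_sb [NeZero n] : (1 : Matrix (Fin n) (Fin n) R) = ∑ p, sb p p 1 := by
  ext i j
  simp only [Matrix.sum_apply, sb, Matrix.single, Matrix.one_apply, of_apply]
  rcases eq_or_ne i j with rfl | h
  · simp
  · rw [if_neg h]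
    symm
    apply Finset.sum_eq_zero
    intro p _
    rw [if_neg]
    rintro ⟨rfl, rfl⟩
    exact h rfl

section bimod

variable (bm : RingBimod (Matrix (Fin n) (Fin n) R) M)

/-- `bm.l A ·` as an `AddMonoidHom`. -/
def lhomM (A : Matrix (Fin n) (Fin n) R) : M →+ M := AddMonoidHom.mk' (bm.l A) (bm.l_add A)

/-- `bm.l · m` as an `AddMonoidHom`. -/
def lhomA (m : M) : Matrix (Fin n) (Fin n) R →+ M :=
  AddMonoidHom.mk' (fun A => bm.l A m) (fun A B => bm.add_l A B m)

/-- `bm.r · A` as an `AddMonoidHom`. -/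
def rhomM (A : Matrix (Fin n) (Fin n) R) : M →+ M :=
  AddMonoidHom.mk' (fun m => bm.r m A) (fun m m' => bm.r_add m m' A)

/-- `bm.r m ·` as an `AddMonoidHom`. -/
def rhomA (m : M) : Matrix (Fin n) (Fin n) R →+ M :=
  AddMonoidHom.mk' (bm.r m) (bm.add_r m)

lemma l_zero (A : Matrix (Fin n) (Fin n) R) : bm.l A 0 = 0 := (lhomM bm A).map_zero
lemma zero_l (m : M) : bm.l 0 m = 0 := (lhomA bm m).map_zero
lemma r_zero (m : M) : bm.r m 0 = 0 := (rhomA bm m).map_zero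
lemma zero_r (A : Matrix (Fin n) (Fin n) R) : bm.r 0 A = 0 := (rhomM bm A).map_zero
lemma l_neg (A : Matrix (Fin n) (Fin n) R) (m : M) : bm.l A (-m) = -bm.l A m :=
  (lhomM bm A).map_neg m
lemma neg_l (A : Matrix (Fin n) (Fin n) R) (m : M) : bm.l (-A) m = -bm.l A m :=
  (lhomA bm m).map_neg A
lemma r_neg (A : Matrix (Fin n) (Fin n) R) (m : M) : bm.r (-m) A = -bm.r m A :=
  (rhomM bm A).map_neg m
lemma neg_r (A : Matrix (Fin n) (Fin n) R) (m : M) : bm.r m (-A) = -bm.r m A :=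
  (rhomA bm m).map_neg A
lemma l_sub (A : Matrix (Fin n) (Fin n) R) (m₁ m₂ : M) :
    bm.l A (m₁ - m₂) = bm.l A m₁ - bm.l A m₂ := (lhomM bm A).map_sub m₁ m₂
lemma sub_l (A B : Matrix (Fin n) (Fin n) R) (m : M) :
    bm.l (A - B) m = bm.l A m - bm.l B m := (lhomA bm m).map_sub A B
lemma r_sub (A : Matrix (Fin n) (Fin n) R) (m₁ m₂ : M) :
    bm.r (m₁ - m₂) A = bm.r m₁ A - bm.r m₂ A := (rhomM bm A).map_sub m₁ m₂
lemma sub_r (A B : Matrix (Fin n) (Fin n) R) (m : M) :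
    bm.r m (A - B) = bm.r m A - bm.r m B := (rhomA bm m).map_sub A B

lemma l_sum {ι : Type*} (s : Finset ι) (A : Matrix (Fin n) (Fin n) R) (f : ι → M) :
    bm.l A (∑ i ∈ s, f i) = ∑ i ∈ s, bm.l A (f i) := map_sum (lhomM bm A) f s
lemma sum_l {ι : Type*} (s : Finset ι) (f : ι → Matrix (Fin n) (Fin n) R) (m : M) :
    bm.l (∑ i ∈ s, f i) m = ∑ i ∈ s, bm.l (f i) m := map_sum (lhomA bm m) f s
lemma r_sum {ι : Type*} (s : Finset ι) (f : ι → M) (A : Matrix (Fin n) (Fin n) R) :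
    bm.r (∑ i ∈ s, f i) A = ∑ i ∈ s, bm.r (f i) A := map_sum (rhomM bm A) f s
lemma sum_r {ι : Type*} (s : Finset ι) (m : M) (f : ι → Matrix (Fin n) (Fin n) R) :
    bm.r m (∑ i ∈ s, f i) = ∑ i ∈ s, bm.r m (f i) := map_sum (rhomA bm m) f s

lemma lr (A B : Matrix (Fin n) (Fin n) R) (m : M) :
    bm.r (bm.l A m) B = bm.l A (bm.r m B) := (bm.l_r A m B).symm

end bimod



/-! ## Context structures -/

structure C0x (R : Type*) [Ring R] (n : ℕ) (M : Type*) [AddCommGroup M] where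
  bm : RingBimod (Matrix (Fin n) (Fin n) R) M
  hn : 2 ≤ n
  hunit : ∀ m : M, bm.l 1 m = m ∧ bm.r m 1 = m
  htf : ∀ m : M, m + m = 0 → m = 0
  D : Matrix (Fin n) (Fin n) R → M
  hadd : ∀ A B, D (A + B) = D A + D B
  hjord : ∀ A B, A * B = 0 → B * A = 0 →
    bm.r (D A) B + bm.l A (D B) + bm.r (D B) A + bm.l B (D A) = 0

namespace C0x

variable {R : Type*} [Ring R] {n : ℕ} {M : Type*} [AddCommGroup M] (c : C0x R n M)

/-- `D` as an `AddMonoidHom`. -/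
def Dhom : Matrix (Fin n) (Fin n) R →+ M := AddMonoidHom.mk' c.D c.hadd

lemma Dzero : c.D 0 = 0 := c.Dhom.map_zero
lemma Dneg (A) : c.D (-A) = -c.D A := c.Dhom.map_neg A
lemma Dsub (A B) : c.D (A - B) = c.D A - c.D B := c.Dhom.map_sub A B
lemma Dsum {ι : Type*} (s : Finset ι) (f : ι → Matrix (Fin n) (Fin n) R) :
    c.D (∑ i ∈ s, f i) = ∑ i ∈ s, c.D (f i) := map_sum c.Dhom f s

lemma hu1 (m : M) : c.bm.l 1 m = m := (c.hunit m).1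
lemma hu2 (m : M) : c.bm.r m 1 = m := (c.hunit m).2

include c in
lemma htf2 {a b : M} (h : a + a = b + b) : a = b := by
  have h2 : (a - b) + (a - b) = 0 := by
    rw [show (a - b) + (a - b) = (a + a) - (b + b) by abel, h, sub_self]
  have h3 := c.htf _ h2
  rwa [sub_eq_zero] at h3

/-- For every idempotent `P`, `D 1` commutes with `P`. -/
lemma idem_central (P : Matrix (Fin n) (Fin n) R) (hP : P * P = P) :
    c.bm.l P (c.D 1) = c.bm.r (c.D 1) P := by
  have h1 : P * (1 - P) = 0 := by rw [mul_sub, mul_one, hP, sub_self]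
  have h2 : (1 - P) * P = 0 := by rw [sub_mul, one_mul, hP, sub_self]
  have hJ := c.hjord P (1 - P) h1 h2
  rw [c.Dsub 1 P] at hJ
  -- sandwich 1: x ↦ l P (r x (1-P)) gives l P c0 = l P (r c0 P)
  have e1 := congrArg (fun x => c.bm.l P (c.bm.r x (1 - P))) hJ
  simp only [c.bm.r_add, r_sub, lr, ← c.bm.r_mul, ← c.bm.mul_l, c.bm.l_add, l_sub,
    mul_sub, sub_mul, mul_one, one_mul, hP, sub_self, r_zero, zero_r, l_zero, zero_l,
    sub_r, sub_l, c.hu1, c.hu2] at e1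
  -- sandwich 2: x ↦ r (l (1-P) x) P gives r c0 P = r (l P c0) P
  have e2 := congrArg (fun x => c.bm.r (c.bm.l (1 - P) x) P) hJ
  simp only [c.bm.l_add, l_sub, c.bm.r_add, r_sub, lr, ← c.bm.r_mul, ← c.bm.mul_l,
    mul_sub, sub_mul, mul_one, one_mul, hP, sub_self, r_zero, zero_r, l_zero, zero_l,
    sub_r, sub_l, c.hu1, c.hu2] at e2
  have f1 : c.bm.l P (c.D 1) - c.bm.l P (c.bm.r (c.D 1) P) = 0 := by rw [← e1]; abel
  have f2 : c.bm.r (c.D 1) P - c.bm.l P (c.bm.r (c.D 1) P) = 0 := by rw [← e2]; abel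
  exact (sub_eq_zero.mp f1).trans (sub_eq_zero.mp f2).symm

include c in
/-- commuting elements are closed under multiplication -/
lemma cen_mul {A B : Matrix (Fin n) (Fin n) R} {m : M}
    (hA : c.bm.l A m = c.bm.r m A) (hB : c.bm.l B m = c.bm.r m B) :
    c.bm.l (A * B) m = c.bm.r m (A * B) := by
  rw [c.bm.mul_l, hB, c.bm.l_r, hA, ← c.bm.r_mul]

lemma sb_idem (i j : Fin n) (hij : i ≠ j) (a : R) :
    (sb i i (1:R) + sb i j a) * (sb i i 1 + sb i j a) = sb i i 1 + sb i j a := by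
  have h1 : sb i j a * sb i j a = 0 := sb_mul_ne _ _ (Ne.symm hij) _ _
  have h2 : sb i j a * sb i i (1:R) = 0 := sb_mul_ne _ _ (Ne.symm hij) _ _
  rw [mul_add, add_mul, add_mul, sb_mul_same, sb_mul_same, h1, h2, one_mul, one_mul]
  abel

/-- `D 1` is central. -/
lemma central (A : Matrix (Fin n) (Fin n) R) : c.bm.l A (c.D 1) = c.bm.r (c.D 1) A := by
  have hn2 := c.hn
  haveI : NeZero n := ⟨by omega⟩
  have hsb : ∀ i j : Fin n, ∀ a : R, c.bm.l (sb i j a) (c.D 1) = c.bm.r (c.D 1) (sb i j a) := by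
    have hdiag : ∀ p : Fin n, c.bm.l (sb p p (1:R)) (c.D 1) = c.bm.r (c.D 1) (sb p p 1) := by
      intro p
      exact c.idem_central _ (by rw [sb_mul_same, one_mul])
    have hoff : ∀ i j : Fin n, i ≠ j → ∀ a : R,
        c.bm.l (sb i j a) (c.D 1) = c.bm.r (c.D 1) (sb i j a) := by
      intro i j hij a
      have hidem := c.idem_central _ (sb_idem i j hij a)
      rw [c.bm.add_l, c.bm.add_r, hdiag i] at hidem
      exact add_left_cancel hidem
    intro i j a
    rcases eq_or_ne i j with rfl | hij
    · -- use sb i i a = sb i q a * sb q i 1 for some q ≠ i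
      obtain ⟨q, hq⟩ : ∃ q : Fin n, q ≠ i := by
        rcases eq_or_ne i ⟨0, by omega⟩ with rfl | h0
        · exact ⟨⟨1, by omega⟩, by simp [Fin.ext_iff]⟩
        · exact ⟨⟨0, by omega⟩, fun h => h0 h.symm⟩
      have : sb i i a = sb i q a * sb q i 1 := by rw [sb_mul_same, mul_one]
      rw [this]
      exact c.cen_mul (hoff i q (Ne.symm hq) a) (hoff q i hq 1)
    · exact hoff i j hij a
  have hA : A = ∑ i, ∑ j, sb i j (A i j) := Matrix.matrix_eq_sum_single A
  calc c.bm.l A (c.D 1) = c.bm.l (∑ i, ∑ j, sb i j (A i j)) (c.D 1) := by rw [← hA]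
    _ = ∑ i, ∑ j, c.bm.l (sb i j (A i j)) (c.D 1) := by
        rw [sum_l]; exact Finset.sum_congr rfl fun i _ => by rw [sum_l]
    _ = ∑ i, ∑ j, c.bm.r (c.D 1) (sb i j (A i j)) := by
        exact Finset.sum_congr rfl fun i _ => Finset.sum_congr rfl fun j _ => hsb i j _
    _ = c.bm.r (c.D 1) (∑ i, ∑ j, sb i j (A i j)) := by
        rw [sum_r]; exact Finset.sum_congr rfl fun i _ => by rw [sum_r]
    _ = c.bm.r (c.D 1) A := by rw [← hA]

end C0x

structure C1x (R : Type*) [Ring R] (n : ℕ) (M : Type*) [AddCommGroup M] extends C0x R n M where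
  hone : D 1 = 0

namespace C1x

variable {R : Type*} [Ring R] {n : ℕ} {M : Type*} [AddCommGroup M] (c : C1x R n M)

lemma jordanIdem (P : Matrix (Fin n) (Fin n) R) (hP : P * P = P) :
    c.D P = c.bm.r (c.D P) P + c.bm.l P (c.D P) := by
  have h1 : P * (1 - P) = 0 := by rw [mul_sub, mul_one, hP, sub_self]
  have h2 : (1 - P) * P = 0 := by rw [sub_mul, one_mul, hP, sub_self]
  have hJ := c.hjord P (1 - P) h1 h2
  rw [c.toC0x.Dsub 1 P, c.hone, zero_sub] at hJ
  simp only [sub_r, sub_l, c.toC0x.hu1, c.toC0x.hu2, l_neg, r_neg, neg_l, neg_r] at hJ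
  apply c.toC0x.htf2
  rw [← sub_eq_zero]
  rw [← hJ]
  abel

lemma idemF2 (P : Matrix (Fin n) (Fin n) R) (hP : P * P = P) :
    c.bm.l P (c.bm.r (c.D P) P) = 0 := by
  have e := congrArg (fun x => c.bm.l P (c.bm.r x P)) (c.jordanIdem P hP)
  simp only [c.bm.r_add, c.bm.l_add, lr, ← c.bm.r_mul, ← c.bm.mul_l, hP] at e
  exact left_eq_add.mp e

lemma pairF1' (p q : Fin n) (hpq : p ≠ q) :
    c.bm.l (sb p p 1) (c.bm.r (c.D (sb q q 1)) (sb q q 1)) =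
      -c.bm.l (sb p p 1) (c.bm.r (c.D (sb p p (1:R))) (sb q q 1)) := by
  have h1 : sb p p (1:R) * sb q q 1 = 0 := sb_mul_ne _ _ hpq _ _
  have h2 : sb q q (1:R) * sb p p 1 = 0 := sb_mul_ne _ _ (Ne.symm hpq) _ _
  have hJ := c.hjord _ _ h1 h2
  have e := congrArg (fun x => c.bm.l (sb p p 1) (c.bm.r x (sb q q 1))) hJ
  simp only [c.bm.r_add, c.bm.l_add, lr, ← c.bm.r_mul, ← c.bm.mul_l, sb_mul_same, one_mul,
    h1, h2, r_zero, zero_r, l_zero, zero_l] at e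
  exact eq_neg_of_add_eq_zero_left (by rw [← e]; abel)

/-- the inner normalizing element -/
def m0 : M := -∑ q, c.bm.r (c.D (sb q q 1)) (sb q q 1)

lemma sb_diag_idem (p : Fin n) : sb p p (1:R) * sb p p 1 = sb p p 1 := by
  rw [sb_mul_same, one_mul]

lemma erase_sum_sb [NeZero n] (p : Fin n) :
    ∑ q ∈ Finset.univ.erase p, sb q q (1:R) = 1 - sb p p 1 := by
  rw [eq_sub_iff_add_eq, Finset.sum_erase_add _ _ (Finset.mem_univ p), ← one_eq_sum_sb]

lemma diag_inner (p : Fin n) :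
    c.D (sb p p 1) = c.bm.l (sb p p 1) c.m0 - c.bm.r c.m0 (sb p p 1) := by
  have hn2 := c.hn
  haveI : NeZero n := ⟨by omega⟩
  have h0 : c.m0 = -∑ q, c.bm.r (c.D (sb q q 1)) (sb q q 1) := rfl
  have hr : c.bm.r c.m0 (sb p p 1) = -c.bm.r (c.D (sb p p 1)) (sb p p 1) := by
    rw [h0, r_neg, r_sum, Finset.sum_eq_single p]
    · rw [← c.bm.r_mul, sb_mul_same, one_mul]
    · intro q _ hq
      rw [← c.bm.r_mul, sb_mul_ne _ _ hq, r_zero]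
    · intro h; exact absurd (Finset.mem_univ p) h
  have hl : c.bm.l (sb p p 1) c.m0 = c.bm.l (sb p p 1) (c.D (sb p p 1)) := by
    rw [h0, l_neg, l_sum, ← Finset.add_sum_erase _ _ (Finset.mem_univ p),
      c.idemF2 _ (sb_diag_idem p), zero_add]
    rw [Finset.sum_congr rfl (fun q hq => c.pairF1' p q
      (fun h => (Finset.ne_of_mem_erase hq) h.symm))]
    rw [Finset.sum_neg_distrib, neg_neg]
    rw [show (∑ q ∈ Finset.univ.erase p,
        c.bm.l (sb p p 1) (c.bm.r (c.D (sb p p (1:R))) (sb q q 1))) =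
        c.bm.l (sb p p 1) (c.bm.r (c.D (sb p p (1:R))) (1 - sb p p 1)) by
      rw [← l_sum, ← sum_r, erase_sum_sb]]
    rw [sub_r, c.toC0x.hu2, l_sub, c.idemF2 _ (sb_diag_idem p), sub_zero]
  rw [hl, hr]
  nth_rewrite 1 [c.jordanIdem (sb p p 1) (sb_diag_idem p)]
  abel

end C1x

structure C2x (R : Type*) [Ring R] (n : ℕ) (M : Type*) [AddCommGroup M] extends C1x R n M where
  hdiag : ∀ p : Fin n, D (sb p p (1:R)) = 0

namespace C2x

variable {R : Type*} [Ring R] {n : ℕ} {M : Type*} [AddCommGroup M] (c : C2x R n M)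

lemma ldecomp [NeZero n] (x : M) : x = ∑ p, c.bm.l (sb p p 1) x := by
  conv_lhs => rw [← c.toC0x.hu1 x]
  rw [one_eq_sum_sb, sum_l]

lemma rdecomp [NeZero n] (x : M) : x = ∑ p, c.bm.r x (sb p p 1) := by
  conv_lhs => rw [← c.toC0x.hu2 x]
  rw [one_eq_sum_sb, sum_r]

/-- If `e_pp` kills `A` on both sides, it kills `D A` on both sides. -/
lemma kill (p : Fin n) (A : Matrix (Fin n) (Fin n) R)
    (h1 : sb p p (1:R) * A = 0) (h2 : A * sb p p (1:R) = 0) :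
    c.bm.l (sb p p 1) (c.D A) = 0 ∧ c.bm.r (c.D A) (sb p p 1) = 0 := by
  have hJ := c.hjord _ _ h1 h2
  rw [c.hdiag p] at hJ
  simp only [zero_r, l_zero, zero_add, add_zero] at hJ
  have e1 := congrArg (c.bm.l (sb p p 1)) hJ
  simp only [c.bm.l_add, ← c.bm.mul_l, c.bm.l_r, C1x.sb_diag_idem, l_zero] at e1
  have e2 := congrArg (fun x => c.bm.r x (sb p p 1)) e1
  simp only [c.bm.r_add, ← c.bm.r_mul, C1x.sb_diag_idem, zero_r] at e2
  have hX := c.htf _ e2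
  rw [hX, add_zero] at e1
  rw [e1, zero_add] at hJ
  exact ⟨e1, hJ⟩

lemma T1 (i j : Fin n) (hij : i ≠ j) (a : R) :
    c.bm.r (c.bm.l (sb j j 1) (c.D (sb i j a))) (sb i j 1) +
      c.bm.r (c.bm.l (sb j j 1) (c.D (sb i j (1:R)))) (sb i j a) = 0 := by
  have h1 : sb i j a * sb i j (1:R) = 0 := sb_mul_ne _ _ (Ne.symm hij) _ _
  have h2 : sb i j (1:R) * sb i j a = 0 := sb_mul_ne _ _ (Ne.symm hij) _ _
  have hJ := c.hjord _ _ h1 h2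
  have e := congrArg (c.bm.l (sb j j 1)) hJ
  simp only [c.bm.l_add, ← c.bm.mul_l, c.bm.l_r, sb_mul_ne _ _ (Ne.symm hij),
    zero_l, l_zero] at e
  rw [← e]
  abel

lemma ew_kill (i j : Fin n) (hij : i ≠ j) :
    c.bm.r (c.bm.l (sb j j 1) (c.D (sb i j (1:R)))) (sb i j 1) = 0 := by
  have e := c.T1 i j hij 1
  exact c.htf _ e

lemma t2 (i j : Fin n) (hij : i ≠ j) (a : R) :
    c.bm.r (c.bm.l (sb j j 1) (c.D (sb i j a))) (sb i j 1) = 0 := by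
  have e := c.T1 i j hij a
  have h : c.bm.r (c.bm.l (sb j j 1) (c.D (sb i j (1:R)))) (sb i j a) = 0 := by
    rw [show sb i j a = sb i j (1:R) * sb j j a by rw [sb_mul_same, one_mul],
      c.bm.r_mul, c.ew_kill i j hij, zero_r]
  rw [h, add_zero] at e
  exact e

lemma t3 (i j : Fin n) (hij : i ≠ j) (a : R) :
    c.bm.l (sb j j 1) (c.bm.r (c.D (sb i j a)) (sb i i 1)) = 0 := by
  rw [show sb i i (1:R) = sb i j 1 * sb j i 1 by rw [sb_mul_same, one_mul],
    c.bm.r_mul, c.bm.l_r, c.bm.l_r, c.t2 i j hij a, zero_r]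

lemma hJP (i j : Fin n) (hij : i ≠ j) (a : R) :
    c.D (sb i j a) = c.bm.r (c.D (sb i j a)) (sb i i 1) + c.bm.r (c.D (sb i j a)) (sb i j a)
      + c.bm.l (sb i i 1) (c.D (sb i j a)) + c.bm.l (sb i j a) (c.D (sb i j a)) := by
  have hDP : c.D (sb i i 1 + sb i j a) = c.D (sb i j a) := by
    rw [c.hadd, c.hdiag, zero_add]
  have hJ := c.jordanIdem _ (C0x.sb_idem i j hij a)
  rw [hDP] at hJ
  simp only [c.bm.add_r, c.bm.add_l] at hJ
  exact hJ.trans (by abel)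

lemma compjj (i j : Fin n) (hij : i ≠ j) (a : R) :
    c.bm.l (sb j j 1) (c.bm.r (c.D (sb i j a)) (sb j j 1)) = 0 := by
  have key : c.bm.l (sb j j 1) (c.bm.r (c.D (sb i j a)) (sb i j a)) = 0 := by
    nth_rewrite 2 [show sb i j a = sb i j (1:R) * sb j j a by rw [sb_mul_same, one_mul]]
    rw [c.bm.r_mul, c.bm.l_r, c.bm.l_r, c.t2 i j hij a, zero_r]
  have e := congrArg (fun x => c.bm.l (sb j j 1) (c.bm.r x (sb j j 1))) (c.hJP i j hij a)
  simp only [c.bm.r_add, c.bm.l_add, lr, ← c.bm.r_mul, ← c.bm.mul_l, sb_mul_same,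
    mul_one, one_mul, sb_mul_ne _ _ hij, sb_mul_ne _ _ (Ne.symm hij), zero_l, l_zero,
    zero_r, r_zero, zero_add, add_zero] at e
  exact e.trans key

lemma clj (i j : Fin n) (hij : i ≠ j) (a : R) :
    c.bm.l (sb j j 1) (c.D (sb i j a)) = 0 := by
  have hn2 := c.hn
  haveI : NeZero n := ⟨by omega⟩
  have hd := c.rdecomp (c.D (sb i j a))
  calc c.bm.l (sb j j 1) (c.D (sb i j a))
      = ∑ q, c.bm.l (sb j j 1) (c.bm.r (c.D (sb i j a)) (sb q q 1)) := by
        conv_lhs => rw [hd]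
        rw [l_sum]
    _ = 0 := by
        apply Finset.sum_eq_zero
        intro q _
        rcases eq_or_ne q i with rfl | hqi
        · exact c.t3 q j hij a
        · rcases eq_or_ne q j with rfl | hqj
          · exact c.compjj i q hij a
          · have hk := (c.kill q (sb i j a) (sb_mul_ne _ _ hqi _ _)
              (sb_mul_ne _ _ (fun h => hqj h.symm) _ _)).2
            rw [hk, l_zero]

lemma compii (i j : Fin n) (hij : i ≠ j) (a : R) :
    c.bm.l (sb i i 1) (c.bm.r (c.D (sb i j a)) (sb i i 1)) = 0 := by
  have key : c.bm.l (sb i j a) (c.bm.r (c.D (sb i j a)) (sb i i 1)) = 0 := by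
    nth_rewrite 1 [show sb i j a = sb i j a * sb j j 1 by rw [sb_mul_same, mul_one]]
    rw [c.bm.mul_l, c.t3 i j hij a, l_zero]
  have e := congrArg (fun x => c.bm.l (sb i i 1) (c.bm.r x (sb i i 1))) (c.hJP i j hij a)
  simp only [c.bm.r_add, c.bm.l_add, lr, ← c.bm.r_mul, ← c.bm.mul_l, sb_mul_same,
    mul_one, one_mul, sb_mul_ne _ _ hij, sb_mul_ne _ _ (Ne.symm hij), zero_l, l_zero,
    zero_r, r_zero, zero_add, add_zero] at e
  rw [key, add_zero] at e
  exact left_eq_add.mp e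

/-- The Peirce corner lemma, left form. -/
lemma corL (i j : Fin n) (a : R) :
    c.bm.l (sb i i 1) (c.D (sb i j a)) = c.D (sb i j a) := by
  have hn2 := c.hn
  haveI : NeZero n := ⟨by omega⟩
  have hd := c.ldecomp (c.D (sb i j a))
  nth_rewrite 2 [hd]
  rw [Finset.sum_eq_single i]
  · intro q _ hqi
    rcases eq_or_ne q j with rfl | hqj
    · rcases eq_or_ne i q with rfl | hij
      · exact absurd rfl hqi
      · exact c.clj i q hij a
    · exact (c.kill q (sb i j a) (sb_mul_ne _ _ hqi _ _)
        (sb_mul_ne _ _ (fun h => hqj h.symm) _ _)).1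
  · intro h; exact absurd (Finset.mem_univ i) h

lemma compri (i j : Fin n) (hij : i ≠ j) (a : R) :
    c.bm.r (c.D (sb i j a)) (sb i i 1) = 0 := by
  have hn2 := c.hn
  haveI : NeZero n := ⟨by omega⟩
  have hd := c.ldecomp (c.bm.r (c.D (sb i j a)) (sb i i 1))
  rw [hd]
  apply Finset.sum_eq_zero
  intro p _
  rcases eq_or_ne p i with rfl | hpi
  · exact c.compii p j hij a
  · rcases eq_or_ne p j with rfl | hpj
    · rw [c.bm.l_r, c.clj i p hij a, zero_r]
    · rw [c.bm.l_r, (c.kill p (sb i j a) (sb_mul_ne _ _ hpi _ _)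
        (sb_mul_ne _ _ (fun h => hpj h.symm) _ _)).1, zero_r]

/-- The Peirce corner lemma, right form. -/
lemma corR (i j : Fin n) (a : R) :
    c.bm.r (c.D (sb i j a)) (sb j j 1) = c.D (sb i j a) := by
  have hn2 := c.hn
  haveI : NeZero n := ⟨by omega⟩
  have hd := c.rdecomp (c.D (sb i j a))
  nth_rewrite 2 [hd]
  rw [Finset.sum_eq_single j]
  · intro q _ hqj
    rcases eq_or_ne q i with rfl | hqi
    · rcases eq_or_ne q j with rfl | hij
      · exact absurd rfl hqj
      · exact c.compri q j hij a
    · exact (c.kill q (sb i j a) (sb_mul_ne _ _ hqi _ _)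
        (sb_mul_ne _ _ (fun h => hqj h.symm) _ _)).2
  · intro h; exact absurd (Finset.mem_univ j) h

lemma killR (i j : Fin n) (a : R) {k : Fin n} (hk : j ≠ k) (l : Fin n) (b : R) :
    c.bm.r (c.D (sb i j a)) (sb k l b) = 0 := by
  rw [← c.corR i j a, ← c.bm.r_mul, sb_mul_ne _ _ hk, r_zero]

lemma killL (i j : Fin n) (a : R) (k : Fin n) {l' : Fin n} (hl : l' ≠ i) (b : R) :
    c.bm.l (sb k l' b) (c.D (sb i j a)) = 0 := by
  rw [← c.corL i j a, ← c.bm.mul_l, sb_mul_ne _ _ hl, zero_l]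

/-- (C5): `D (z_jl) = D (z_jj) E_jl + z_jj D (E_jl)` for `j ≠ l`. -/
lemma U2r (j l : Fin n) (hjl : j ≠ l) (z : R) :
    c.D (sb j l z) = c.bm.r (c.D (sb j j z)) (sb j l 1) + c.bm.l (sb j j z) (c.D (sb j l 1)) := by
  have hAB : (sb j j z + sb j l z) * (sb j l 1 - sb l l 1) = 0 := by
    simp [mul_sub, add_mul, sb_mul_ne _ _ hjl, sb_mul_ne _ _ (Ne.symm hjl)]
  have hBA : (sb j l (1:R) - sb l l 1) * (sb j j z + sb j l z) = 0 := by
    simp [sub_mul, mul_add, sb_mul_ne _ _ (Ne.symm hjl)]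
  have hJ := c.hjord _ _ hAB hBA
  simp only [c.hadd, c.Dsub, c.hdiag, sub_zero, c.bm.l_add, c.bm.add_l, c.bm.r_add,
    c.bm.add_r, l_sub, sub_l, r_sub, sub_r, c.killL, c.killR, c.corL, c.corR,
    hjl, Ne.symm hjl, l_zero, zero_l, r_zero, zero_r, add_zero, zero_add, sub_zero,
    zero_sub, ne_eq, not_false_eq_true] at hJ
  have final : (c.bm.r (c.D (sb j j z)) (sb j l 1)
      + c.bm.l (sb j j z) (c.D (sb j l 1))) - c.D (sb j l z) = 0 := by rw [← hJ]; abel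
  exact (sub_eq_zero.mp final).symm

/-- (C6): `D (z_ij) = E_ij D (z_jj) + D (E_ij) z_jj` for `i ≠ j`. -/
lemma U1 (i j : Fin n) (hij : i ≠ j) (z : R) :
    c.D (sb i j z) = c.bm.l (sb i j 1) (c.D (sb j j z))
      + c.bm.r (c.D (sb i j (1:R))) (sb j j z) := by
  have hAB : (sb i i (1:R) - sb i j 1) * (sb i j z + sb j j z) = 0 := by
    simp [sub_mul, mul_add, sb_mul_ne _ _ hij, sb_mul_ne _ _ (Ne.symm hij)]
  have hBA : (sb i j z + sb j j z) * (sb i i (1:R) - sb i j 1) = 0 := by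
    simp [mul_sub, add_mul, sb_mul_ne _ _ hij, sb_mul_ne _ _ (Ne.symm hij)]
  have hJ := c.hjord _ _ hAB hBA
  simp only [c.hadd, c.Dsub, c.hdiag, sub_zero, zero_sub, c.bm.l_add, c.bm.add_l,
    c.bm.r_add, c.bm.add_r, l_sub, sub_l, r_sub, sub_r, l_neg, neg_l, r_neg, neg_r,
    c.killL, c.killR, c.corL, c.corR, hij, Ne.symm hij, l_zero, zero_l, r_zero, zero_r,
    add_zero, zero_add, neg_zero, ne_eq, not_false_eq_true] at hJ
  have final : c.D (sb i j z) - (c.bm.l (sb i j 1) (c.D (sb j j z))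
      + c.bm.r (c.D (sb i j (1:R))) (sb j j z)) = 0 := by rw [← hJ]; abel
  exact sub_eq_zero.mp final

/-- (κ): `D (E_ij) E_ji + E_ij D (E_ji) = 0` for `i ≠ j`. -/
lemma kappa (i j : Fin n) (hij : i ≠ j) :
    c.bm.r (c.D (sb i j (1:R))) (sb j i 1) + c.bm.l (sb i j 1) (c.D (sb j i (1:R))) = 0 := by
  set N : Matrix (Fin n) (Fin n) R := sb i i 1 + sb i j 1 - sb j i 1 - sb j j 1 with hN
  have hNN : N * N = 0 := by
    rw [hN]
    simp only [add_mul, sub_mul, mul_add, mul_sub, sb_mul_same, one_mul,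
      sb_mul_ne _ _ hij, sb_mul_ne _ _ (Ne.symm hij)]
    abel
  have hJ := c.hjord N N hNN hNN
  have h2 : (c.bm.r (c.D N) N + c.bm.l N (c.D N)) +
      (c.bm.r (c.D N) N + c.bm.l N (c.D N)) = 0 := by rw [← hJ]; abel
  have hX := c.htf _ h2
  have hDN : c.D N = c.D (sb i j 1) - c.D (sb j i 1) := by
    rw [hN, c.Dsub, c.Dsub, c.hadd, c.hdiag, c.hdiag, zero_add, sub_zero]
  rw [hDN] at hX
  have e := congrArg (c.bm.l (sb i i 1)) hX
  simp only [hN, c.bm.l_add, c.bm.add_l, c.bm.r_add, c.bm.add_r, l_sub, sub_l, r_sub,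
    sub_r, c.bm.l_r, ← c.bm.mul_l, sb_mul_same, one_mul, sb_mul_ne _ _ hij,
    sb_mul_ne _ _ (Ne.symm hij), c.killL, c.killR, c.corL, c.corR, hij, Ne.symm hij,
    l_neg, neg_l, r_neg, neg_r, neg_neg,
    l_zero, zero_l, r_zero, zero_r, add_zero, zero_add, sub_zero, zero_sub, neg_zero,
    ne_eq, not_false_eq_true] at e
  exact neg_eq_zero.mp (by rw [← e]; abel)

/-- (C8/W'): `D (z_ii) = D (z_ij) E_ji + z_ij D (E_ji)` for `i ≠ j`. -/
lemma Wp (i j : Fin n) (hij : i ≠ j) (z : R) :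
    c.D (sb i i z) = c.bm.r (c.D (sb i j z)) (sb j i 1) + c.bm.l (sb i j z) (c.D (sb j i 1)) := by
  have h1 : c.bm.r (c.D (sb i j z)) (sb j i 1) = c.D (sb i i z)
      + c.bm.l (sb i i z) (c.bm.r (c.D (sb i j (1:R))) (sb j i 1)) := by
    rw [c.U2r i j hij z, c.bm.r_add, ← c.bm.r_mul, sb_mul_same, one_mul, c.corR, lr]
  have h2 : c.bm.l (sb i j z) (c.D (sb j i (1:R))) =
      c.bm.l (sb i i z) (c.bm.l (sb i j 1) (c.D (sb j i (1:R)))) := by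
    rw [← c.bm.mul_l, sb_mul_same, mul_one]
  rw [h1, h2, add_assoc, ← c.bm.l_add, c.kappa i j hij, l_zero, add_zero]

/-- (C9): `D (z_il) = D (z_ij) E_jl + z_ij D (E_jl)` for distinct `i j l`. -/
lemma Wd (i j l : Fin n) (hij : i ≠ j) (hjl : j ≠ l) (hil : i ≠ l) (z : R) :
    c.D (sb i l z) = c.bm.r (c.D (sb i j z)) (sb j l 1) + c.bm.l (sb i j z) (c.D (sb j l 1)) := by
  have hAB : (sb i j z - sb i l z) * (sb j l 1 + sb l l 1) = 0 := by
    simp [sub_mul, mul_add, sb_mul_ne _ _ hjl, sb_mul_ne _ _ (Ne.symm hjl)]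
  have hBA : (sb j l (1:R) + sb l l 1) * (sb i j z - sb i l z) = 0 := by
    simp [add_mul, mul_sub, sb_mul_ne _ _ (Ne.symm hil)]
  have hJ := c.hjord _ _ hAB hBA
  simp only [c.hadd, c.Dsub, c.hdiag, sub_zero, c.bm.l_add, c.bm.add_l, c.bm.r_add,
    c.bm.add_r, l_sub, sub_l, r_sub, sub_r, c.killL, c.killR, c.corL, c.corR,
    hij, Ne.symm hij, hjl, Ne.symm hjl, hil, Ne.symm hil,
    l_zero, zero_l, r_zero, zero_r, add_zero, zero_add, sub_zero, zero_sub,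
    ne_eq, not_false_eq_true] at hJ
  have final : (c.bm.r (c.D (sb i j z)) (sb j l 1)
      + c.bm.l (sb i j z) (c.D (sb j l 1))) - c.D (sb i l z) = 0 := by rw [← hJ]; abel
  exact (sub_eq_zero.mp final).symm

/-- (Y1): `D ((zy)_ij) = D (z_ij) y_jj + z_ij D (y_jj)` for `i ≠ j`. -/
lemma Y1 (i j : Fin n) (hij : i ≠ j) (z y : R) :
    c.D (sb i j (z * y)) = c.bm.r (c.D (sb i j z)) (sb j j y)
      + c.bm.l (sb i j z) (c.D (sb j j y)) := by
  have hAB : (sb i i (1:R) + sb i j z) * (sb j j y - sb i j (z * y)) = 0 := by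
    simp [add_mul, mul_sub, sb_mul_ne _ _ hij, sb_mul_ne _ _ (Ne.symm hij)]
  have hBA : (sb j j y - sb i j (z * y)) * (sb i i (1:R) + sb i j z) = 0 := by
    simp [sub_mul, mul_add, sb_mul_ne _ _ (Ne.symm hij)]
  have hJ := c.hjord _ _ hAB hBA
  simp only [c.hadd, c.Dsub, c.hdiag, sub_zero, zero_add, c.bm.l_add, c.bm.add_l,
    c.bm.r_add, c.bm.add_r, l_sub, sub_l, r_sub, sub_r, c.killL, c.killR, c.corL,
    c.corR, hij, Ne.symm hij, l_zero, zero_l, r_zero, zero_r, add_zero, sub_zero,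
    zero_sub, ne_eq, not_false_eq_true] at hJ
  have final : (c.bm.r (c.D (sb i j z)) (sb j j y)
      + c.bm.l (sb i j z) (c.D (sb j j y))) - c.D (sb i j (z * y)) = 0 := by
    rw [← hJ]; abel
  exact (sub_eq_zero.mp final).symm

/-- (A3): `D ((zy)_ii) = D (z_ij) y_ji + z_ij D (y_ji)` for `i ≠ j`. -/
lemma A3 (i j : Fin n) (hij : i ≠ j) (z y : R) :
    c.D (sb i i (z * y)) = c.bm.r (c.D (sb i j z)) (sb j i y)
      + c.bm.l (sb i j z) (c.D (sb j i y)) := by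
  have h0 := c.Wp i j hij (z * y)
  rw [c.Y1 i j hij z y] at h0
  simp only [c.bm.r_add] at h0
  have h1 : c.bm.r (c.bm.r (c.D (sb i j z)) (sb j j y)) (sb j i 1)
      = c.bm.r (c.D (sb i j z)) (sb j i y) := by rw [← c.bm.r_mul, sb_mul_same, mul_one]
  have h2 : c.bm.r (c.bm.l (sb i j z) (c.D (sb j j y))) (sb j i 1)
      = c.bm.l (sb i j z) (c.bm.r (c.D (sb j j y)) (sb j i 1)) := lr _ _ _ _
  have h3 : c.bm.l (sb i j (z * y)) (c.D (sb j i (1:R)))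
      = c.bm.l (sb i j z) (c.bm.l (sb j j y) (c.D (sb j i (1:R)))) := by
    rw [← c.bm.mul_l, sb_mul_same]
  rw [h1, h2, h3, add_assoc, ← c.bm.l_add, ← c.U2r j i (Ne.symm hij) y] at h0
  exact h0

lemma exists_ne_fin (hn : 2 ≤ n) (p : Fin n) : ∃ q : Fin n, q ≠ p := by
  rcases eq_or_ne p ⟨0, by omega⟩ with rfl | h0
  · exact ⟨⟨1, by omega⟩, by simp [Fin.ext_iff]⟩
  · exact ⟨⟨0, by omega⟩, fun h => h0 (h ▸ rfl)⟩

/-- (A5): `D ((zy)_pp) = D (z_pp) y_pp + z_pp D (y_pp)`. -/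
lemma A5 (p : Fin n) (z y : R) :
    c.D (sb p p (z * y)) = c.bm.r (c.D (sb p p z)) (sb p p y)
      + c.bm.l (sb p p z) (c.D (sb p p y)) := by
  obtain ⟨q, hq⟩ := exists_ne_fin c.hn p
  have hpq : p ≠ q := fun h => hq h.symm
  have h0 := c.A3 p q hpq z y
  rw [c.U2r p q hpq z, c.U1 q p hq y] at h0
  simp only [c.bm.r_add, c.bm.l_add] at h0
  have h1 : c.bm.r (c.bm.r (c.D (sb p p z)) (sb p q 1)) (sb q p y)
      = c.bm.r (c.D (sb p p z)) (sb p p y) := by rw [← c.bm.r_mul, sb_mul_same, one_mul]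
  have h4 : c.bm.r (c.bm.l (sb p p z) (c.D (sb p q (1:R)))) (sb q p y)
      = c.bm.l (sb p p z) (c.bm.r (c.bm.r (c.D (sb p q (1:R))) (sb q p 1)) (sb p p y)) := by
    rw [lr, show sb q p y = sb q p (1:R) * sb p p y from by rw [sb_mul_same, one_mul],
      c.bm.r_mul]
  have h2 : c.bm.l (sb p q z) (c.bm.l (sb q p 1) (c.D (sb p p y)))
      = c.bm.l (sb p p z) (c.D (sb p p y)) := by rw [← c.bm.mul_l, sb_mul_same, mul_one]
  have h3 : c.bm.l (sb p q z) (c.bm.r (c.D (sb q p (1:R))) (sb p p y))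
      = c.bm.l (sb p p z) (c.bm.r (c.bm.l (sb p q 1) (c.D (sb q p (1:R)))) (sb p p y)) := by
    rw [show sb p q z = sb p p z * sb p q (1:R) from by rw [sb_mul_same, mul_one],
      c.bm.mul_l, c.bm.l_r]
  have h5 : c.bm.l (sb p p z) (c.bm.r (c.bm.r (c.D (sb p q (1:R))) (sb q p 1)) (sb p p y))
      + c.bm.l (sb p p z) (c.bm.r (c.bm.l (sb p q 1) (c.D (sb q p (1:R)))) (sb p p y)) = 0 := by
    rw [← c.bm.l_add, ← c.bm.r_add, c.kappa p q hpq, zero_r, l_zero]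
  rw [h1, h4, h2, h3] at h0
  rw [h0, ← sub_eq_zero, ← h5]
  abel

/-- (A1): `D ((zy)_pl) = D (z_pp) y_pl + z_pp D (y_pl)` for `p ≠ l`. -/
lemma A1 (p l : Fin n) (hpl : p ≠ l) (z y : R) :
    c.D (sb p l (z * y)) = c.bm.r (c.D (sb p p z)) (sb p l y)
      + c.bm.l (sb p p z) (c.D (sb p l y)) := by
  have h0 := c.U2r p l hpl (z * y)
  rw [c.A5 p z y] at h0
  simp only [c.bm.r_add] at h0
  have h1 : c.bm.r (c.bm.r (c.D (sb p p z)) (sb p p y)) (sb p l 1)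
      = c.bm.r (c.D (sb p p z)) (sb p l y) := by rw [← c.bm.r_mul, sb_mul_same, mul_one]
  have h2 : c.bm.r (c.bm.l (sb p p z) (c.D (sb p p y))) (sb p l 1)
      = c.bm.l (sb p p z) (c.bm.r (c.D (sb p p y)) (sb p l 1)) := lr _ _ _ _
  have h3 : c.bm.l (sb p p (z * y)) (c.D (sb p l (1:R)))
      = c.bm.l (sb p p z) (c.bm.l (sb p p y) (c.D (sb p l (1:R)))) := by
    rw [← c.bm.mul_l, sb_mul_same]
  rw [h1, h2, h3, add_assoc, ← c.bm.l_add, ← c.U2r p l hpl y] at h0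
  exact h0

/-- (A4): `D ((zy)_il) = D (z_ij) y_jl + z_ij D (y_jl)` for distinct `i j l`. -/
lemma A4 (i j l : Fin n) (hij : i ≠ j) (hjl : j ≠ l) (hil : i ≠ l) (z y : R) :
    c.D (sb i l (z * y)) = c.bm.r (c.D (sb i j z)) (sb j l y)
      + c.bm.l (sb i j z) (c.D (sb j l y)) := by
  have h0 := c.Wd i j l hij hjl hil (z * y)
  rw [c.Y1 i j hij z y] at h0
  simp only [c.bm.r_add] at h0
  have h1 : c.bm.r (c.bm.r (c.D (sb i j z)) (sb j j y)) (sb j l 1)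
      = c.bm.r (c.D (sb i j z)) (sb j l y) := by rw [← c.bm.r_mul, sb_mul_same, mul_one]
  have h2 : c.bm.r (c.bm.l (sb i j z) (c.D (sb j j y))) (sb j l 1)
      = c.bm.l (sb i j z) (c.bm.r (c.D (sb j j y)) (sb j l 1)) := lr _ _ _ _
  have h3 : c.bm.l (sb i j (z * y)) (c.D (sb j l (1:R)))
      = c.bm.l (sb i j z) (c.bm.l (sb j j y) (c.D (sb j l (1:R)))) := by
    rw [← c.bm.mul_l, sb_mul_same]
  rw [h1, h2, h3, add_assoc, ← c.bm.l_add, ← c.U2r j l hjl y] at h0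
  exact h0

lemma deriv_sb (i j k l : Fin n) (z y : R) :
    c.D (sb i j z * sb k l y)
      = c.bm.r (c.D (sb i j z)) (sb k l y) + c.bm.l (sb i j z) (c.D (sb k l y)) := by
  rcases eq_or_ne j k with rfl | hjk
  · rw [sb_mul_same]
    rcases eq_or_ne i j with rfl | hij
    · rcases eq_or_ne i l with rfl | hil
      · exact c.A5 i z y
      · exact c.A1 i l hil z y
    · rcases eq_or_ne j l with rfl | hjl
      · exact c.Y1 i j hij z y
      · rcases eq_or_ne i l with rfl | hil
        · exact c.A3 i j hij z y
        · exact c.A4 i j l hij hjl hil z y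
  · rw [sb_mul_ne _ _ hjk, c.Dzero, c.killR i j z hjk l y, c.killL k l y i hjk z, add_zero]

/-- The normalized map is a derivation. -/
lemma deriv (A B : Matrix (Fin n) (Fin n) R) :
    c.D (A * B) = c.bm.r (c.D A) B + c.bm.l A (c.D B) := by
  have hA : A = ∑ p, ∑ q, sb p q (A p q) := Matrix.matrix_eq_sum_single A
  have hB : B = ∑ p, ∑ q, sb p q (B p q) := Matrix.matrix_eq_sum_single B
  rw [hA, hB]
  simp only [Finset.sum_mul, Finset.mul_sum, c.Dsum, r_sum, sum_r, l_sum, sum_l]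
  simp only [← Finset.sum_add_distrib]
  refine Finset.sum_congr rfl fun p _ => Finset.sum_congr rfl fun q _ =>
    Finset.sum_congr rfl fun p' _ => Finset.sum_congr rfl fun q' _ => c.deriv_sb p' q' p q _ _

end C2x

end Stmt1Aux

open Stmt1Aux in
theorem stmt1 (R : Type*) [Ring R] (n : ℕ) (hn : 2 ≤ n)
    (M : Type*) [AddCommGroup M] (bm : RingBimod (Matrix (Fin n) (Fin n) R) M)
    (hunit : ∀ m : M, bm.l 1 m = m ∧ bm.r m 1 = m)
    (htf : ∀ m : M, m + m = 0 → m = 0)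
    (D : Matrix (Fin n) (Fin n) R → M)
    (hadd : ∀ A B, D (A + B) = D A + D B)
    (hD : ∀ A B, A * B = 0 → B * A = 0 →
      bm.r (D A) B + bm.l A (D B) + bm.r (D B) A + bm.l B (D A) = 0) :
    ∃ δ : Matrix (Fin n) (Fin n) R → M,
      (∀ A B, δ (A + B) = δ A + δ B) ∧
      (∀ A B, δ (A * B) = bm.r (δ A) B + bm.l A (δ B)) ∧
      (∀ A, D A = δ A + bm.l A (D 1)) ∧
      (∀ A, bm.l A (D 1) = bm.r (D 1) A) := by
  classical
  let c0 : C0x R n M := ⟨bm, hn, hunit, htf, D, hadd, hD⟩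
  have cen : ∀ A, bm.l A (D 1) = bm.r (D 1) A := fun A => c0.central A
  have hgadd : ∀ A B : Matrix (Fin n) (Fin n) R,
      (D (A + B) - bm.l (A + B) (D 1)) = (D A - bm.l A (D 1)) + (D B - bm.l B (D 1)) := by
    intro A B; rw [hadd, bm.add_l]; abel
  have hgjord : ∀ A B : Matrix (Fin n) (Fin n) R, A * B = 0 → B * A = 0 →
      bm.r (D A - bm.l A (D 1)) B + bm.l A (D B - bm.l B (D 1))
        + bm.r (D B - bm.l B (D 1)) A + bm.l B (D A - bm.l A (D 1)) = 0 := by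
    intro A B h1 h2
    have k1 : bm.r (bm.l A (D 1)) B = 0 := by rw [lr, ← cen B, ← bm.mul_l, h1, zero_l]
    have k2 : bm.l A (bm.l B (D 1)) = 0 := by rw [← bm.mul_l, h1, zero_l]
    have k3 : bm.r (bm.l B (D 1)) A = 0 := by rw [lr, ← cen A, ← bm.mul_l, h2, zero_l]
    have k4 : bm.l B (bm.l A (D 1)) = 0 := by rw [← bm.mul_l, h2, zero_l]
    have hJ := hD A B h1 h2
    simp only [r_sub, l_sub, k1, k2, k3, k4, sub_zero]
    exact hJ
  have hg1 : D 1 - bm.l 1 (D 1) = 0 := by rw [(hunit (D 1)).1, sub_self]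
  let c1 : C1x R n M :=
    ⟨⟨bm, hn, hunit, htf, fun A => D A - bm.l A (D 1), hgadd, hgjord⟩, hg1⟩
  have h2add : ∀ A B : Matrix (Fin n) (Fin n) R,
      ((D (A + B) - bm.l (A + B) (D 1)) - (bm.l (A + B) c1.m0 - bm.r c1.m0 (A + B)))
        = ((D A - bm.l A (D 1)) - (bm.l A c1.m0 - bm.r c1.m0 A))
          + ((D B - bm.l B (D 1)) - (bm.l B c1.m0 - bm.r c1.m0 B)) := by
    intro A B; rw [hadd, bm.add_l, bm.add_l, bm.add_r]; abel
  have h2jord : ∀ A B : Matrix (Fin n) (Fin n) R, A * B = 0 → B * A = 0 →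
      bm.r ((D A - bm.l A (D 1)) - (bm.l A c1.m0 - bm.r c1.m0 A)) B
        + bm.l A ((D B - bm.l B (D 1)) - (bm.l B c1.m0 - bm.r c1.m0 B))
        + bm.r ((D B - bm.l B (D 1)) - (bm.l B c1.m0 - bm.r c1.m0 B)) A
        + bm.l B ((D A - bm.l A (D 1)) - (bm.l A c1.m0 - bm.r c1.m0 A)) = 0 := by
    intro A B h1 h2
    have hJ := hgjord A B h1 h2
    simp only [r_sub, l_sub, lr, ← bm.r_mul, ← bm.mul_l, h1, h2, r_zero, zero_l,
      l_zero, zero_r, sub_zero, zero_sub, add_zero, zero_add] at hJ ⊢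
    rw [← hJ]
    abel
  have h2one : (D 1 - bm.l 1 (D 1)) - (bm.l 1 c1.m0 - bm.r c1.m0 1) = 0 := by
    rw [(hunit (D 1)).1, (hunit c1.m0).1, (hunit c1.m0).2]
    abel
  have h2diag : ∀ p : Fin n,
      (D (sb p p (1:R)) - bm.l (sb p p 1) (D 1))
        - (bm.l (sb p p 1) c1.m0 - bm.r c1.m0 (sb p p 1)) = 0 := by
    intro p
    have hdi : (D (sb p p 1) - bm.l (sb p p 1) (D 1))
        = bm.l (sb p p 1) c1.m0 - bm.r c1.m0 (sb p p 1) := c1.diag_inner p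
    rw [hdi, sub_self]
  let c2 : C2x R n M :=
    ⟨⟨⟨bm, hn, hunit, htf,
      fun A => (D A - bm.l A (D 1)) - (bm.l A c1.m0 - bm.r c1.m0 A), h2add, h2jord⟩,
      h2one⟩, h2diag⟩
  refine ⟨fun A => D A - bm.l A (D 1), hgadd, ?_, ?_, ?_⟩
  · intro A B
    have hd : ((D (A * B) - bm.l (A * B) (D 1)) - (bm.l (A * B) c1.m0 - bm.r c1.m0 (A * B)))
        = bm.r ((D A - bm.l A (D 1)) - (bm.l A c1.m0 - bm.r c1.m0 A)) B
          + bm.l A ((D B - bm.l B (D 1)) - (bm.l B c1.m0 - bm.r c1.m0 B)) := c2.deriv A B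
    simp only [r_sub, l_sub, lr, ← bm.r_mul, ← bm.mul_l] at hd ⊢
    rw [← sub_eq_zero] at hd ⊢
    rw [← hd]
    abel
  · intro A
    show D A = (D A - bm.l A (D 1)) + bm.l A (D 1)
    abel
  · exact cen
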